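/- Let y : [0,T] → [0,∞) be continuous and satisfy y(t) ≤ C₄(δ₀ + ∫₀ᵗ y(s)³ ds) for all t, with C₄ ≥ 1 and 2tδ₀²C₄³ < 1. Then y(t) ≤ √(δ₀²C₄²/(1 − 2tδ₀²C₄³)). In particular, if T ≤ 1/(4δ₀²C₄³) then y(t) ≤ √2 δ₀C₄ on [0,T]. -/

import Mathlib

/-- Cubic Grönwall-type inequality.  If a continuous nonnegative
`y` satisfies `y t ≤ C₄(δ₀ + ∫₀ᵗ y³)` with `C₄ ≥ 1`, then wherever
`2 t δ₀² C₄³ < 1` one has `y t ≤ √(δ₀²C₄²/(1 - 2tδ₀²C₄³))`; in particular if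
`T ≤ 1/(4δ₀²C₄³)` then `y t ≤ √2 δ₀ C₄` on `[0,T]`. -/
theorem stmt17_cubic_gronwall
    (T δ₀ C₄ : ℝ) (hT : 0 ≤ T) (hδ₀ : 0 < δ₀) (hC₄ : 1 ≤ C₄)
    (y : ℝ → ℝ) (hycont : ContinuousOn y (Set.Icc 0 T))
    (hynn : ∀ t ∈ Set.Icc 0 T, 0 ≤ y t)
    (hy : ∀ t ∈ Set.Icc 0 T, y t ≤ C₄ * (δ₀ + ∫ s in (0:ℝ)..t, (y s) ^ 3)) :
    (∀ t ∈ Set.Icc 0 T, 2 * t * δ₀ ^ 2 * C₄ ^ 3 < 1 →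
      y t ≤ Real.sqrt (δ₀ ^ 2 * C₄ ^ 2 / (1 - 2 * t * δ₀ ^ 2 * C₄ ^ 3))) ∧
    (T ≤ 1 / (4 * δ₀ ^ 2 * C₄ ^ 3) →
      ∀ t ∈ Set.Icc 0 T, y t ≤ Real.sqrt 2 * δ₀ * C₄) := by
  have hC₄0 : (0:ℝ) < C₄ := lt_of_lt_of_le one_pos hC₄
  -- clamp function
  set c : ℝ → ℝ := fun t => max 0 (min t T) with hcdef
  have hcC : Continuous c := continuous_const.max (continuous_id.min continuous_const)
  have hcmem : ∀ t, c t ∈ Set.Icc 0 T := fun t =>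
    ⟨le_max_left _ _, max_le hT (min_le_right _ _)⟩
  have hceq : ∀ t ∈ Set.Icc 0 T, c t = t := by
    intro t ht
    simp [hcdef, min_eq_left ht.2, max_eq_right ht.1]
  set g : ℝ → ℝ := fun t => y (c t) with hgdef
  have hgC : Continuous g := hycont.comp_continuous hcC hcmem
  have hgnn : ∀ t, 0 ≤ g t := fun t => hynn _ (hcmem t)
  have hg3C : Continuous fun t => g t ^ 3 := hgC.pow 3
  set z : ℝ → ℝ := fun t => δ₀ + ∫ s in (0:ℝ)..t, (g s) ^ 3 with hzdef
  have hzderiv : ∀ t, HasDerivAt z (g t ^ 3) t := by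
    intro t
    have h := intervalIntegral.integral_hasDerivAt_right (hg3C.intervalIntegrable 0 t)
      (hg3C.stronglyMeasurableAtFilter _ _) hg3C.continuousAt
    exact ((hasDerivAt_const t δ₀).add h).congr_deriv (zero_add _)
  have hzC : Continuous z := by
    rw [continuous_iff_continuousAt]; exact fun t => (hzderiv t).continuousAt
  have hz0 : z 0 = δ₀ := by simp [hzdef]
  -- z ≥ δ₀ on [0, T]
  have hzge : ∀ t ∈ Set.Icc 0 T, δ₀ ≤ z t := by
    intro t ht
    have hint : 0 ≤ ∫ s in (0:ℝ)..t, (g s) ^ 3 :=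
      intervalIntegral.integral_nonneg ht.1 (fun s _ => pow_nonneg (hgnn s) 3)
    simp only [hzdef]; linarith
  have hzpos : ∀ t ∈ Set.Icc 0 T, 0 < z t := fun t ht => lt_of_lt_of_le hδ₀ (hzge t ht)
  -- y ≤ C₄ z on [0, T]
  have hyz : ∀ t ∈ Set.Icc 0 T, y t ≤ C₄ * z t := by
    intro t ht
    have hcongr : (∫ s in (0:ℝ)..t, (y s) ^ 3) = ∫ s in (0:ℝ)..t, (g s) ^ 3 := by
      apply intervalIntegral.integral_congr
      intro s hs
      rw [Set.uIcc_of_le ht.1] at hs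
      have hsT : s ∈ Set.Icc 0 T := ⟨hs.1, le_trans hs.2 ht.2⟩
      rw [hgdef]; simp only; rw [hceq s hsT]
    have := hy t ht
    rw [hcongr] at this
    simpa [hzdef] using this
  -- w := (z^2)⁻¹ + 2 C₄³ t  is monotone on [0,T]
  set w : ℝ → ℝ := fun t => (z t ^ 2)⁻¹ + 2 * C₄ ^ 3 * t with hwdef
  have hwderiv : ∀ x ∈ Set.Icc 0 T, HasDerivAt w
      (-(2 * z x ^ 1 * g x ^ 3) / (z x ^ 2) ^ 2 + 2 * C₄ ^ 3) x := by
    intro x hx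
    have hzne : z x ≠ 0 := ne_of_gt (hzpos x hx)
    have h1 : HasDerivAt (fun t => (z t ^ 2)⁻¹)
        (-(2 * z x ^ 1 * g x ^ 3) / (z x ^ 2) ^ 2) x := by
      have := ((hzderiv x).pow 2).inv (pow_ne_zero 2 hzne)
      exact this.congr_deriv (by norm_num)
    have h2 : HasDerivAt (fun t : ℝ => 2 * C₄ ^ 3 * t) (2 * C₄ ^ 3) x := by
      simpa using (hasDerivAt_id x).const_mul (2 * C₄ ^ 3)
    exact h1.add h2
  have hwmono : MonotoneOn w (Set.Icc 0 T) := by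
    apply monotoneOn_of_deriv_nonneg (convex_Icc 0 T)
    · exact ContinuousOn.add
        ((hzC.continuousOn.pow 2).inv₀ fun x hx => pow_ne_zero 2 (ne_of_gt (hzpos x hx)))
        ((continuous_const.mul continuous_id).continuousOn)
    · intro x hx
      rw [interior_Icc] at hx
      exact (hwderiv x ⟨le_of_lt hx.1, le_of_lt hx.2⟩).differentiableAt.differentiableWithinAt
    · intro x hx
      rw [interior_Icc] at hx
      have hxI : x ∈ Set.Icc 0 T := ⟨le_of_lt hx.1, le_of_lt hx.2⟩
      rw [(hwderiv x hxI).deriv]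
      have hzx : 0 < z x := hzpos x hxI
      have hgx : g x = y x := by rw [hgdef]; simp only; rw [hceq x hxI]
      have hyx : y x ≤ C₄ * z x := hyz x hxI
      have hyxnn : 0 ≤ y x := hynn x hxI
      have hcube : y x ^ 3 ≤ (C₄ * z x) ^ 3 := by
        apply pow_le_pow_left₀ hyxnn hyx
      have hkey : 2 * z x ^ 1 * g x ^ 3 ≤ 2 * C₄ ^ 3 * (z x ^ 2) ^ 2 := by
        rw [hgx]; nlinarith [pow_pos hzx 3, sq_nonneg (z x)]
      have hpos : (0:ℝ) < (z x ^ 2) ^ 2 := by positivity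
      rw [neg_div, neg_add_eq_sub, sub_nonneg, div_le_iff₀ hpos]
      linarith [hkey]
  -- main quantitative bound
  have main : ∀ t ∈ Set.Icc 0 T, 2 * t * δ₀ ^ 2 * C₄ ^ 3 < 1 →
      y t ≤ Real.sqrt (δ₀ ^ 2 * C₄ ^ 2 / (1 - 2 * t * δ₀ ^ 2 * C₄ ^ 3)) := by
    intro t ht hlt
    set P : ℝ := 1 - 2 * t * δ₀ ^ 2 * C₄ ^ 3 with hPdef
    have hP : 0 < P := by linarith
    have hw0 : w 0 = (δ₀ ^ 2)⁻¹ := by simp [hwdef, hz0]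
    have hmono := hwmono (Set.left_mem_Icc.2 hT) ht ht.1
    rw [hw0] at hmono
    -- (z t ^ 2)⁻¹ ≥ P / δ₀²
    have hinv : P / δ₀ ^ 2 ≤ (z t ^ 2)⁻¹ := by
      have hδ₀2 : (0:ℝ) < δ₀ ^ 2 := by positivity
      have hmono' : (δ₀ ^ 2)⁻¹ ≤ (z t ^ 2)⁻¹ + 2 * C₄ ^ 3 * t := hmono
      have heq : P / δ₀ ^ 2 = (δ₀ ^ 2)⁻¹ - 2 * C₄ ^ 3 * t := by
        rw [hPdef]; field_simp
      rw [heq]; linarith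
    have hzt : 0 < z t := hzpos t ht
    have hzt2 : 0 < z t ^ 2 := by positivity
    have hz2le : z t ^ 2 ≤ δ₀ ^ 2 / P := by
      rw [le_div_iff₀ hP]
      have h1 : z t ^ 2 * (P / δ₀ ^ 2) ≤ z t ^ 2 * (z t ^ 2)⁻¹ :=
        mul_le_mul_of_nonneg_left hinv (le_of_lt hzt2)
      rw [mul_inv_cancel₀ (ne_of_gt hzt2)] at h1
      have hδ₀2 : (0:ℝ) < δ₀ ^ 2 := by positivity
      calc z t ^ 2 * P = (z t ^ 2 * (P / δ₀ ^ 2)) * δ₀ ^ 2 := by field_simp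
        _ ≤ 1 * δ₀ ^ 2 := by nlinarith
        _ = δ₀ ^ 2 := one_mul _
    have hysq : y t ^ 2 ≤ δ₀ ^ 2 * C₄ ^ 2 / P := by
      have h1 : y t ^ 2 ≤ (C₄ * z t) ^ 2 := by
        apply pow_le_pow_left₀ (hynn t ht) (hyz t ht)
      calc y t ^ 2 ≤ (C₄ * z t) ^ 2 := h1
        _ = C₄ ^ 2 * z t ^ 2 := by ring
        _ ≤ C₄ ^ 2 * (δ₀ ^ 2 / P) := by nlinarith
        _ = δ₀ ^ 2 * C₄ ^ 2 / P := by ring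
    rw [Real.le_sqrt (hynn t ht) (div_nonneg (by positivity) hP.le)]
    exact hysq
  refine ⟨main, ?_⟩
  intro hT' t ht
  have h4 : (0:ℝ) < 4 * δ₀ ^ 2 * C₄ ^ 3 := by positivity
  have hhalf : 2 * t * δ₀ ^ 2 * C₄ ^ 3 ≤ 1 / 2 := by
    have htle : t ≤ 1 / (4 * δ₀ ^ 2 * C₄ ^ 3) := le_trans ht.2 hT'
    rw [le_div_iff₀ h4] at htle
    nlinarith
  have hlt : 2 * t * δ₀ ^ 2 * C₄ ^ 3 < 1 := lt_of_le_of_lt hhalf (by norm_num)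
  have h1 := main t ht hlt
  have hden : (1:ℝ)/2 ≤ 1 - 2 * t * δ₀ ^ 2 * C₄ ^ 3 := by linarith
  have hsqle : Real.sqrt (δ₀ ^ 2 * C₄ ^ 2 / (1 - 2 * t * δ₀ ^ 2 * C₄ ^ 3))
      ≤ Real.sqrt (2 * (δ₀ ^ 2 * C₄ ^ 2)) := by
    apply Real.sqrt_le_sqrt
    rw [div_le_iff₀ (by linarith)]
    nlinarith [sq_nonneg δ₀, sq_nonneg C₄, mul_pos (pow_pos hδ₀ 2) (pow_pos hC₄0 2)]
  have heq : Real.sqrt (2 * (δ₀ ^ 2 * C₄ ^ 2)) = Real.sqrt 2 * δ₀ * C₄ := by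
    have : (2 : ℝ) * (δ₀ ^ 2 * C₄ ^ 2) = (Real.sqrt 2 * δ₀ * C₄) ^ 2 := by
      have h2 : Real.sqrt 2 ^ 2 = 2 := Real.sq_sqrt (by norm_num)
      nlinarith
    rw [this, Real.sqrt_sq (by positivity)]
  linarith [hsqle, heq.le, heq.ge, h1]
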